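/- arXiv:1605.06404 — 3 statements merged into one kernel-verified Lean document; each statement's English description precedes it below -/
import Mathlib

section
/- For every $\epsilon > 0$, let $U_\epsilon : \mathbb{R}^3 \to \mathbb{R}$ be defined by $U_\epsilon(x) = (3\epsilon^2)^{1/4}(\epsilon^2 + |x|^2)^{-1/2}$. Then $\int_{\mathbb{R}^3} |\nabla U_\epsilon(x)|^2 \, dx = \int_{\mathbb{R}^3} |U_\epsilon(x)|^6 \, dx = \frac{3\sqrt{3}\,\pi^2}{4}$; in particular both integrals equal $S^{3/2}$ with $S = 3(\pi/2)^{4/3}$, independently of $\epsilon$. -/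
open MeasureTheory Real

noncomputable section

/-- The Aubin–Talenti extremal `U_ε(x) = (3ε²)^{1/4} (ε² + |x|²)^{-1/2}` on ℝ³. -/
def Ueps (ε : ℝ) (x : EuclideanSpace ℝ (Fin 3)) : ℝ :=
  (3 * ε ^ 2) ^ ((1 : ℝ) / 4) * (ε ^ 2 + ‖x‖ ^ 2) ^ (-(1 : ℝ) / 2)

section Aux

open Set Filter Topology InnerProductSpace

lemma aux_int_sq (a : ℝ) (ha : 0 < a) :
    ∫ y in Ioi (0:ℝ), y ^ 2 / (a ^ 2 + y ^ 2) ^ 3 = π / (16 * a ^ 3) := by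
  have ha2 : ∀ y : ℝ, (0:ℝ) < a ^ 2 + y ^ 2 := fun y => by positivity
  set F : ℝ → ℝ := fun y => arctan (y / a) / (8 * a ^ 3) +
    (y ^ 3 - a ^ 2 * y) / (8 * a ^ 2 * (a ^ 2 + y ^ 2) ^ 2) with hF
  have hderiv : ∀ y ∈ Ici (0:ℝ), HasDerivAt F (y ^ 2 / (a ^ 2 + y ^ 2) ^ 3) y := by
    intro y _
    have h1 : HasDerivAt (fun y : ℝ => arctan (y / a)) ((1 + (y/a)^2)⁻¹ * (1/a)) y := by
      simpa [Function.comp_def] using (Real.hasDerivAt_arctan (y / a)).comp y ((hasDerivAt_id y).div_const a)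
    have hn : HasDerivAt (fun y : ℝ => y ^ 3 - a ^ 2 * y) (3 * y ^ 2 - a ^ 2) y := by
      simpa [Pi.sub_def] using ((hasDerivAt_pow 3 y).sub ((hasDerivAt_id y).const_mul (a^2)))
    have hd : HasDerivAt (fun y : ℝ => 8 * a ^ 2 * (a ^ 2 + y ^ 2) ^ 2)
        (8 * a ^ 2 * (2 * (a ^ 2 + y ^ 2) * (2 * y))) y := by
      have h' := (((hasDerivAt_pow 2 y).const_add (a ^ 2)).pow 2).const_mul (8 * a ^ 2)
      refine HasDerivAt.congr_deriv h' ?_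
      push_cast
      ring
    have h2 := hn.div hd (by positivity)
    have := (h1.div_const (8 * a ^ 3)).add h2
    refine HasDerivAt.congr_deriv this ?_
    have h1a : (1 : ℝ) + (y/a)^2 ≠ 0 := by positivity
    field_simp
    ring
  have hpos : ∀ y ∈ Ioi (0:ℝ), 0 ≤ y ^ 2 / (a ^ 2 + y ^ 2) ^ 3 := fun y _ => by positivity
  have hlim : Tendsto F atTop (𝓝 (π / 2 / (8 * a ^ 3) + 0)) := by
    apply Tendsto.add
    · exact (Real.tendsto_arctan_atTop.mono_right nhdsWithin_le_nhds |>.comp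
        (tendsto_id.atTop_div_const ha)).div_const _
    · have hb : ∀ᶠ y in atTop, |((y:ℝ) ^ 3 - a ^ 2 * y) / (8 * a ^ 2 * (a ^ 2 + y ^ 2) ^ 2)| ≤ 1 / (8 * a ^ 2 * y) := by
        filter_upwards [eventually_ge_atTop (max a 1)] with y hy
        have hya : a ≤ y := le_trans (le_max_left _ _) hy
        have hy1 : (1:ℝ) ≤ y := le_trans (le_max_right _ _) hy
        have hy0 : (0:ℝ) < y := lt_of_lt_of_le one_pos hy1
        rw [abs_div, abs_of_nonneg (by nlinarith [mul_nonneg (mul_nonneg hy0.le (sub_nonneg.2 hya)) (by positivity : (0:ℝ) ≤ y + a)]), abs_of_nonneg (by positivity),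
          div_le_div_iff₀ (by positivity) (by positivity)]
        nlinarith [pow_pos ha 6, mul_nonneg (le_of_lt (pow_pos ha 4)) (sq_nonneg y)]
      have h0 : Tendsto (fun y : ℝ => 1 / (8 * a ^ 2 * y)) atTop (𝓝 0) := by
        apply Tendsto.div_atTop tendsto_const_nhds
        exact (tendsto_id.const_mul_atTop (by positivity))
      exact squeeze_zero_norm' hb h0
  have key := integral_Ioi_of_hasDerivAt_of_nonneg'
    (g := F) (g' := fun y => y ^ 2 / (a ^ 2 + y ^ 2) ^ 3) hderiv hpos hlim
  rw [key, hF]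
  simp only [zero_pow, arctan_zero]
  norm_num
  ring

lemma aux_int_quartic (a : ℝ) (ha : 0 < a) :
    ∫ y in Ioi (0:ℝ), y ^ 4 / (a ^ 2 + y ^ 2) ^ 3 = 3 * π / (16 * a) := by
  have ha2 : ∀ y : ℝ, (0:ℝ) < a ^ 2 + y ^ 2 := fun y => by positivity
  set F : ℝ → ℝ := fun y => 3 * arctan (y / a) / (8 * a) -
    (5 * y ^ 3 + 3 * a ^ 2 * y) / (8 * (a ^ 2 + y ^ 2) ^ 2) with hF
  have hderiv : ∀ y ∈ Ici (0:ℝ), HasDerivAt F (y ^ 4 / (a ^ 2 + y ^ 2) ^ 3) y := by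
    intro y _
    have h1 : HasDerivAt (fun y : ℝ => 3 * arctan (y / a)) ((1 + (y/a)^2)⁻¹ * (1/a) * 3) y := by
      simpa [mul_comm] using
        (((Real.hasDerivAt_arctan (y / a)).comp y ((hasDerivAt_id y).div_const a)).const_mul 3)
    have hn : HasDerivAt (fun y : ℝ => 5 * y ^ 3 + 3 * a ^ 2 * y) (5 * (3 * y ^ 2) + 3 * a ^ 2) y := by
      simpa [Pi.add_def] using (((hasDerivAt_pow 3 y).const_mul 5).add ((hasDerivAt_id y).const_mul (3 * a^2)))
    have hd : HasDerivAt (fun y : ℝ => 8 * (a ^ 2 + y ^ 2) ^ 2)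
        (8 * (2 * (a ^ 2 + y ^ 2) * (2 * y))) y := by
      have h' := (((hasDerivAt_pow 2 y).const_add (a ^ 2)).pow 2).const_mul (8 : ℝ)
      refine HasDerivAt.congr_deriv h' ?_
      push_cast
      ring
    have h2 := hn.div hd (by positivity)
    have := (h1.div_const (8 * a)).sub h2
    refine HasDerivAt.congr_deriv this ?_
    have h1a : (1 : ℝ) + (y/a)^2 ≠ 0 := by positivity
    field_simp
    ring
  have hpos : ∀ y ∈ Ioi (0:ℝ), 0 ≤ y ^ 4 / (a ^ 2 + y ^ 2) ^ 3 := fun y _ => by positivity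
  have hlim : Tendsto F atTop (𝓝 (3 * (π / 2) / (8 * a) - 0)) := by
    apply Tendsto.sub
    · exact ((Real.tendsto_arctan_atTop.mono_right nhdsWithin_le_nhds |>.comp
        (tendsto_id.atTop_div_const ha)).const_mul 3).div_const _
    · have hb : ∀ᶠ y in atTop,
          |(5 * (y:ℝ) ^ 3 + 3 * a ^ 2 * y) / (8 * (a ^ 2 + y ^ 2) ^ 2)| ≤ 1 / y := by
        filter_upwards [eventually_ge_atTop (max a 1)] with y hy
        have hya : a ≤ y := le_trans (le_max_left _ _) hy
        have hy1 : (1:ℝ) ≤ y := le_trans (le_max_right _ _) hy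
        have hy0 : (0:ℝ) < y := lt_of_lt_of_le one_pos hy1
        rw [abs_div, abs_of_nonneg (by positivity), abs_of_nonneg (by positivity),
          div_le_div_iff₀ (by positivity) (by positivity)]
        nlinarith [mul_nonneg (mul_nonneg (sub_nonneg.2 hya) hy0.le) hy0.le,
          pow_pos ha 4, mul_nonneg (le_of_lt (pow_pos ha 2)) (sq_nonneg y),
          mul_nonneg (mul_nonneg (sub_nonneg.2 hya) hy0.le) (sq_nonneg y)]
      have h0 : Tendsto (fun y : ℝ => 1 / y) atTop (𝓝 0) := by
        simpa using tendsto_inv_atTop_zero (𝕜 := ℝ)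
      exact squeeze_zero_norm' hb h0
  have key := integral_Ioi_of_hasDerivAt_of_nonneg'
    (g := F) (g' := fun y => y ^ 4 / (a ^ 2 + y ^ 2) ^ 3) hderiv hpos hlim
  rw [key, hF]
  simp only [zero_pow, arctan_zero]
  norm_num
  ring

lemma aux_ball_vol3 : (volume (Metric.ball (0 : EuclideanSpace ℝ (Fin 3)) 1)).toReal = 4 * π / 3 := by
  rw [EuclideanSpace.volume_ball]
  have h52 : Real.Gamma ((Fintype.card (Fin 3) : ℝ) / 2 + 1) = 3 * Real.sqrt π / 4 := by
    have : ((Fintype.card (Fin 3) : ℝ) / 2 + 1) = 3 / 2 + 1 := by norm_num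
    rw [this, Real.Gamma_add_one (by norm_num)]
    have : (3 / 2 : ℝ) = 1 / 2 + 1 := by norm_num
    rw [this, Real.Gamma_add_one (by norm_num), Real.Gamma_one_half_eq]
    ring
  rw [h52]
  have hπ : (0:ℝ) ≤ π := pi_pos.le
  have hs : Real.sqrt π ^ 3 = π * Real.sqrt π := by
    rw [pow_succ, sq_sqrt hπ]
  simp only [Fintype.card_fin]
  rw [ENNReal.toReal_mul, ENNReal.toReal_pow, ENNReal.toReal_ofReal (by norm_num),
    ENNReal.toReal_ofReal (by positivity)]
  rw [hs]
  have hsne : Real.sqrt π ≠ 0 := by positivity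
  field_simp

lemma aux_radial3 (f : ℝ → ℝ) :
    (∫ x : EuclideanSpace ℝ (Fin 3), f ‖x‖) = 4 * π * ∫ y in Ioi (0:ℝ), y ^ 2 * f y := by
  rw [MeasureTheory.integral_fun_norm_addHaar volume f, measureReal_def, aux_ball_vol3]
  have hd : Module.finrank ℝ (EuclideanSpace ℝ (Fin 3)) = 3 := by
    simp [finrank_euclideanSpace]
  rw [hd]
  simp only [smul_eq_mul, nsmul_eq_mul]
  ring

lemma aux_grad_Ueps (ε : ℝ) (hε : 0 < ε) (x : EuclideanSpace ℝ (Fin 3)) :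
    gradient (Ueps ε) x =
      (-(3 * ε ^ 2) ^ ((1 : ℝ) / 4) * (ε ^ 2 + ‖x‖ ^ 2) ^ (-(3 : ℝ) / 2)) • x := by
  set c : ℝ := (3 * ε ^ 2) ^ ((1 : ℝ) / 4) with hc
  set t : ℝ := ε ^ 2 + ‖x‖ ^ 2 with ht
  have ht0 : 0 < t := by positivity
  have hh : HasFDerivAt (fun x : EuclideanSpace ℝ (Fin 3) => ε ^ 2 + ‖x‖ ^ 2)
      (2 • (innerSL ℝ x)) x := by
    simpa using ((hasFDerivAt_id x).norm_sq.const_add (ε ^ 2))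
  have hφ : HasDerivAt (fun s : ℝ => c * s ^ (-(1:ℝ) / 2))
      (c * (-(1:ℝ)/2 * t ^ (-(1:ℝ)/2 - 1))) t :=
    (Real.hasDerivAt_rpow_const (Or.inl ht0.ne')).const_mul c
  have hcomp := hφ.comp_hasFDerivAt x hh
  have hgrad : HasGradientAt (Ueps ε)
      ((-c * t ^ (-(3:ℝ)/2)) • x) x := by
    rw [hasGradientAt_iff_hasFDerivAt]
    refine HasFDerivAt.congr_fderiv hcomp ?_
    ext y
    simp only [toDual_apply_apply, ContinuousLinearMap.coe_smul', Pi.smul_apply,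
      ContinuousLinearMap.smul_apply, innerSL_apply_apply, smul_eq_mul]
    rw [real_inner_smul_left]
    have : t ^ (-(1:ℝ)/2 - 1) = t ^ (-(3:ℝ)/2) := by norm_num
    rw [this]
    ring
  rw [hgrad.gradient]

lemma aux_grad_norm_sq (ε : ℝ) (hε : 0 < ε) (x : EuclideanSpace ℝ (Fin 3)) :
    ‖gradient (Ueps ε) x‖ ^ 2 =
      Real.sqrt 3 * ε * (‖x‖ ^ 2 / (ε ^ 2 + ‖x‖ ^ 2) ^ 3) := by
  rw [aux_grad_Ueps ε hε x, norm_smul]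
  set t : ℝ := ε ^ 2 + ‖x‖ ^ 2 with ht
  have ht0 : 0 < t := by positivity
  have hc2 : ((3 * ε ^ 2) ^ ((1:ℝ)/4)) ^ 2 = Real.sqrt 3 * ε := by
    rw [← Real.rpow_natCast ((3 * ε ^ 2) ^ ((1:ℝ)/4)) 2, ← Real.rpow_mul (by positivity)]
    norm_num
    rw [← Real.sqrt_eq_rpow, Real.sqrt_mul (by norm_num), Real.sqrt_sq hε.le]
  have hts : (t ^ (-(3:ℝ)/2)) ^ 2 = (t ^ 3)⁻¹ := by
    rw [← Real.rpow_natCast (t ^ (-(3:ℝ)/2)) 2, ← Real.rpow_mul ht0.le]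
    norm_num
  rw [Real.norm_eq_abs, mul_pow, sq_abs, neg_mul, neg_sq, mul_pow, hc2, hts]
  ring

lemma aux_Ueps_pow6 (ε : ℝ) (hε : 0 < ε) (x : EuclideanSpace ℝ (Fin 3)) :
    |Ueps ε x| ^ 6 = 3 * Real.sqrt 3 * ε ^ 3 * ((ε ^ 2 + ‖x‖ ^ 2) ^ 3)⁻¹ := by
  set t : ℝ := ε ^ 2 + ‖x‖ ^ 2 with ht
  have ht0 : 0 < t := by positivity
  have habs : |Ueps ε x| = Ueps ε x := abs_of_nonneg (by
    unfold Ueps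
    positivity)
  rw [habs]
  unfold Ueps
  rw [mul_pow]
  have hc6 : ((3 * ε ^ 2) ^ ((1:ℝ)/4)) ^ 6 = 3 * Real.sqrt 3 * ε ^ 3 := by
    rw [← Real.rpow_natCast ((3 * ε ^ 2) ^ ((1:ℝ)/4)) 6, ← Real.rpow_mul (by positivity)]
    norm_num
    rw [show (3:ℝ)/2 = 1 + (1:ℝ)/2 by norm_num, Real.rpow_add (by positivity), Real.rpow_one,
      ← Real.sqrt_eq_rpow, Real.sqrt_mul (by norm_num), Real.sqrt_sq hε.le]
    ring
  have hts : ((t : ℝ) ^ (-(1:ℝ)/2)) ^ 6 = (t ^ 3)⁻¹ := by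
    rw [← Real.rpow_natCast (t ^ (-(1:ℝ)/2)) 6, ← Real.rpow_mul ht0.le]
    norm_num
  rw [hc6, hts]

end Aux

/-- **Lemma 2.2 (energies of the extremal).** For every `ε > 0`,
`∫ |∇U_ε|² = ∫ |U_ε|⁶ = 3√3 π²/4`, and this common value equals `S^{3/2}` with
`S = 3 (π/2)^{4/3}`. -/
theorem Ueps_energies (ε : ℝ) (hε : 0 < ε) :
    (∫ x, ‖gradient (Ueps ε) x‖ ^ 2) = 3 * Real.sqrt 3 * π ^ 2 / 4 ∧
    (∫ x, |Ueps ε x| ^ 6) = 3 * Real.sqrt 3 * π ^ 2 / 4 ∧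
    3 * Real.sqrt 3 * π ^ 2 / 4 = (3 * (π / 2) ^ ((4 : ℝ) / 3)) ^ ((3 : ℝ) / 2) := by
  refine ⟨?_, ?_, ?_⟩
  · have h1 : (∫ x, ‖gradient (Ueps ε) x‖ ^ 2) =
        ∫ x : EuclideanSpace ℝ (Fin 3),
          (fun r : ℝ => Real.sqrt 3 * ε * (r ^ 2 / (ε ^ 2 + r ^ 2) ^ 3)) ‖x‖ := by
      congr 1
      funext x
      exact aux_grad_norm_sq ε hε x
    rw [h1, aux_radial3 (fun r : ℝ => Real.sqrt 3 * ε * (r ^ 2 / (ε ^ 2 + r ^ 2) ^ 3))]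
    have h2 : ∀ y : ℝ, y ^ 2 * (Real.sqrt 3 * ε * (y ^ 2 / (ε ^ 2 + y ^ 2) ^ 3)) =
        Real.sqrt 3 * ε * (y ^ 4 / (ε ^ 2 + y ^ 2) ^ 3) := by
      intro y; ring
    simp only [h2]
    rw [MeasureTheory.integral_const_mul, aux_int_quartic ε hε]
    field_simp
    ring
  · have h1 : (∫ x, |Ueps ε x| ^ 6) =
        ∫ x : EuclideanSpace ℝ (Fin 3),
          (fun r : ℝ => 3 * Real.sqrt 3 * ε ^ 3 * ((ε ^ 2 + r ^ 2) ^ 3)⁻¹) ‖x‖ := by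
      congr 1
      funext x
      exact aux_Ueps_pow6 ε hε x
    rw [h1, aux_radial3 (fun r : ℝ => 3 * Real.sqrt 3 * ε ^ 3 * ((ε ^ 2 + r ^ 2) ^ 3)⁻¹)]
    have h2 : ∀ y : ℝ, y ^ 2 * (3 * Real.sqrt 3 * ε ^ 3 * ((ε ^ 2 + y ^ 2) ^ 3)⁻¹) =
        3 * Real.sqrt 3 * ε ^ 3 * (y ^ 2 / (ε ^ 2 + y ^ 2) ^ 3) := by
      intro y; ring
    simp only [h2]
    rw [MeasureTheory.integral_const_mul, aux_int_sq ε hε]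
    field_simp
    ring
  · have hπ2 : (0:ℝ) ≤ π / 2 := by positivity
    rw [Real.mul_rpow (by norm_num) (Real.rpow_nonneg hπ2 _), ← Real.rpow_mul hπ2]
    norm_num
    rw [show (3:ℝ)/2 = 1 + (1:ℝ)/2 by norm_num, Real.rpow_add (by norm_num), Real.rpow_one,
      ← Real.sqrt_eq_rpow]
    ring
end
end

section
/- Let $a, b, S > 0$ and let $\eta > 0$, $\nu > 0$ be real numbers satisfying $\nu \le S^{-3} \eta^3$ and $\nu \ge a\eta + b\eta^2$. Then $\frac{a}{4}\eta + \frac{1}{12}\nu \ge \Lambda$, where $\Lambda = \frac{1}{4} a b S^3 + \frac{1}{24} b^3 S^6 + \frac{1}{24}(b^2 S^4 + 4 a S)^{3/2}$. -/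
open Real

/-- **Eq. (4.11) of Lemma 4.3.** If `a, b, S > 0`, `η, ν > 0`, `ν ≤ S⁻³ η³` and
`ν ≥ aη + bη²`, then `(a/4)η + (1/12)ν ≥ Λ` where
`Λ = (1/4)abS³ + (1/24)b³S⁶ + (1/24)(b²S⁴ + 4aS)^{3/2}`. -/
theorem threshold_lower_bound (a b S η ν : ℝ)
    (ha : 0 < a) (hb : 0 < b) (hS : 0 < S) (hη : 0 < η) (hν : 0 < ν)
    (h1 : ν ≤ (S ^ 3)⁻¹ * η ^ 3) (h2 : a * η + b * η ^ 2 ≤ ν) :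
    1 / 4 * a * b * S ^ 3 + 1 / 24 * b ^ 3 * S ^ 6
        + 1 / 24 * (b ^ 2 * S ^ 4 + 4 * a * S) ^ ((3 : ℝ) / 2)
      ≤ a / 4 * η + 1 / 12 * ν := by
  have hxpos : (0:ℝ) < b ^ 2 * S ^ 4 + 4 * a * S := by positivity
  set E := Real.sqrt (b ^ 2 * S ^ 4 + 4 * a * S) with hEdef
  have hE2 : E ^ 2 = b ^ 2 * S ^ 4 + 4 * a * S := Real.sq_sqrt hxpos.le
  have hEnn : 0 ≤ E := Real.sqrt_nonneg _
  have hrw : (b ^ 2 * S ^ 4 + 4 * a * S) ^ ((3 : ℝ) / 2)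
      = (b ^ 2 * S ^ 4 + 4 * a * S) * E := by
    rw [show (3:ℝ)/2 = 1 + 1/2 by norm_num, Real.rpow_add hxpos, Real.rpow_one,
      ← Real.sqrt_eq_rpow]
  -- from the two constraints: η² ≥ bS³η + aS³
  have hS3 : (0:ℝ) < S ^ 3 := by positivity
  have hchain : a * η + b * η ^ 2 ≤ (S ^ 3)⁻¹ * η ^ 3 := le_trans h2 h1
  have hη2 : b * S ^ 3 * η + a * S ^ 3 ≤ η ^ 2 := by
    have := mul_le_mul_of_nonneg_left hchain hS3.le
    rw [mul_inv_cancel_left₀ hS3.ne'] at this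
    nlinarith [hη, hS3]
  -- hence 2η - bS³ ≥ 0
  have hpos : 0 ≤ 2 * η - b * S ^ 3 := by nlinarith [mul_pos hb hS3, hη]
  -- key: E*S ≤ 2η - bS³ since (E*S)² = b²S⁶+4aS³ ≤ (2η-bS³)²
  have hkey : E * S ≤ 2 * η - b * S ^ 3 := by
    have hsq : (E * S) ^ 2 ≤ (2 * η - b * S ^ 3) ^ 2 := by nlinarith [hE2, hη2]
    nlinarith [mul_nonneg hEnn hS.le, hpos, hsq]
  rw [hrw]
  nlinarith [mul_le_mul_of_nonneg_left hkey ha.le,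
    mul_nonneg (mul_nonneg hb.le (sub_nonneg.2 hkey))
      (by nlinarith [mul_nonneg hEnn hS.le, mul_pos hb hS3] :
        (0:ℝ) ≤ 2 * η + (b * S ^ 3 + E * S)),
    hE2, h2, mul_pos hb hS3]
end

section
/- Let $a, b, S, D, C > 0$ and $1 \le q < 2$. Define $\tilde g(t) = \frac{a}{2} S^{3/2} t^2 + \frac{b}{4} S^3 t^4 - \frac{1}{6} S^{3/2} t^6$ and $\Lambda = \frac{1}{4} a b S^3 + \frac{1}{24} b^3 S^6 + \frac{1}{24}(b^2 S^4 + 4 a S)^{3/2}$. Then there exists $\lambda_2 > 0$ such that for every $\lambda \in (0, \lambda_2)$ one has $\sup_{t \ge 0} \left( \tilde g(t) - \frac{\lambda D}{q} t^q \right) < \Lambda - C \lambda^{\frac{2}{2-q}}$. -/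
open Real

set_option maxHeartbeats 1600000

/-- **Lemma 4.4, scalar form.** For `a, b, S, D, C > 0` and `1 ≤ q < 2`, with
`g̃(t) = (a/2)S^{3/2}t² + (b/4)S³t⁴ - (1/6)S^{3/2}t⁶` and
`Λ = (1/4)abS³ + (1/24)b³S⁶ + (1/24)(b²S⁴ + 4aS)^{3/2}`, there is `λ₂ > 0` such that
for every `λ ∈ (0, λ₂)` one has
`sup_{t ≥ 0} (g̃(t) - (λD/q)t^q) < Λ - C λ^{2/(2-q)}`. -/
theorem sup_below_threshold (a b S D C q : ℝ)
    (ha : 0 < a) (hb : 0 < b) (hS : 0 < S) (hD : 0 < D) (hC : 0 < C)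
    (hq1 : 1 ≤ q) (hq2 : q < 2) :
    ∃ lam₂ > 0, ∀ lam : ℝ, 0 < lam → lam < lam₂ →
      sSup ((fun t : ℝ =>
            a / 2 * S ^ ((3 : ℝ) / 2) * t ^ 2 + b / 4 * S ^ 3 * t ^ 4
              - 1 / 6 * S ^ ((3 : ℝ) / 2) * t ^ 6 - lam * D / q * t ^ q) '' Set.Ici 0)
        < 1 / 4 * a * b * S ^ 3 + 1 / 24 * b ^ 3 * S ^ 6
            + 1 / 24 * (b ^ 2 * S ^ 4 + 4 * a * S) ^ ((3 : ℝ) / 2)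
          - C * lam ^ ((2 : ℝ) / (2 - q)) := by
  have hq0 : 0 < q := lt_of_lt_of_le one_pos hq1
  have h2q : 0 < 2 - q := by linarith
  obtain ⟨v, hv_def⟩ : ∃ v : ℝ, v = Real.sqrt S := ⟨_, rfl⟩
  obtain ⟨u, hu_def⟩ : ∃ u : ℝ, u = Real.sqrt (b ^ 2 * S ^ 4 + 4 * a * S) := ⟨_, rfl⟩
  have hv : 0 < v := hv_def ▸ Real.sqrt_pos.2 hS
  have hv2 : v ^ 2 = S := by rw [hv_def]; exact Real.sq_sqrt hS.le
  have hupos : 0 < u := hu_def ▸ Real.sqrt_pos.2 (by positivity)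
  have hu2 : u ^ 2 = b ^ 2 * v ^ 8 + 4 * a * v ^ 2 := by
    rw [hu_def, Real.sq_sqrt (by positivity), ← hv2]; ring
  -- rpow rewrites
  have h32 : S ^ ((3 : ℝ) / 2) = v ^ 3 := by
    rw [hv_def, Real.sqrt_eq_rpow, ← Real.rpow_natCast (S ^ ((1:ℝ)/2)) 3,
      ← Real.rpow_mul hS.le]
    norm_num
  have hu3 : (b ^ 2 * S ^ 4 + 4 * a * S) ^ ((3 : ℝ) / 2) = u ^ 3 := by
    rw [hu_def, Real.sqrt_eq_rpow,
      ← Real.rpow_natCast ((b ^ 2 * S ^ 4 + 4 * a * S) ^ ((1:ℝ)/2)) 3,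
      ← Real.rpow_mul (by positivity)]
    norm_num
  -- Λ in polynomial form
  obtain ⟨L, hL_def⟩ : ∃ L : ℝ, L = 1 / 4 * a * b * S ^ 3 + 1 / 24 * b ^ 3 * S ^ 6
      + 1 / 24 * (b ^ 2 * S ^ 4 + 4 * a * S) ^ ((3 : ℝ) / 2) := ⟨_, rfl⟩
  have hLpoly : L = 1 / 4 * a * b * v ^ 6 + 1 / 24 * b ^ 3 * v ^ 12 + 1 / 24 * u ^ 3 := by
    rw [hL_def, hu3, ← hv2]; ring
  have hLpos : 0 < L := by rw [hLpoly]; positivity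
  have hub : b * v ^ 4 ≤ u := by nlinarith [hu2, mul_pos ha (pow_pos hv 2), mul_pos hb (pow_pos hv 4)]
  -- pointwise bound g̃(t) ≤ L
  have hg : ∀ t : ℝ,
      a / 2 * S ^ ((3 : ℝ) / 2) * t ^ 2 + b / 4 * S ^ 3 * t ^ 4
        - 1 / 6 * S ^ ((3 : ℝ) / 2) * t ^ 6 ≤ L := by
    intro t
    rw [h32, hLpoly, ← hv2]
    have h1 : 0 ≤ (2*v*t^2 - b*v^4 - u)^2 * (2*v*t^2 + 2*u - b*v^4) := by
      have h2 : 0 ≤ 2*v*t^2 + 2*u - b*v^4 := by nlinarith [mul_nonneg hv.le (sq_nonneg t)]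
      exact mul_nonneg (sq_nonneg _) h2
    have key : 48 * ((1/4*a*b*v^6 + 1/24*b^3*v^12 + 1/24*u^3)
        - (a/2*v^3*t^2 + b/4*v^6*t^4 - 1/6*v^3*t^6))
        = (2*v*t^2 - b*v^4 - u)^2 * (2*v*t^2 + 2*u - b*v^4) := by
      linear_combination (6*t^2*v - 3*b*v^4) * hu2
    linarith [h1, key]
  -- small-t control
  obtain ⟨K, hK_def⟩ : ∃ K : ℝ, K = a / 2 * v ^ 3 + b / 4 * v ^ 6 := ⟨_, rfl⟩
  have hK : 0 < K := by rw [hK_def]; positivity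
  obtain ⟨t₀, ht₀_def⟩ : ∃ t₀ : ℝ, t₀ = min 1 (Real.sqrt (L / (2 * K))) := ⟨_, rfl⟩
  have ht₀pos : 0 < t₀ := ht₀_def ▸ lt_min one_pos (Real.sqrt_pos.2 (by positivity))
  have ht₀le1 : t₀ ≤ 1 := ht₀_def ▸ min_le_left _ _
  have ht₀sq : K * t₀ ^ 2 ≤ L / 2 := by
    have h1 : t₀ ^ 2 ≤ L / (2 * K) := by
      have h0 : t₀ ≤ Real.sqrt (L / (2 * K)) := ht₀_def ▸ min_le_right _ _
      calc t₀ ^ 2 ≤ (Real.sqrt (L / (2 * K))) ^ 2 :=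
            pow_le_pow_left₀ ht₀pos.le h0 2
        _ = L / (2 * K) := Real.sq_sqrt (by positivity)
    calc K * t₀ ^ 2 ≤ K * (L / (2 * K)) := mul_le_mul_of_nonneg_left h1 hK.le
      _ = L / 2 := by field_simp
  obtain ⟨ε, hε_def⟩ : ∃ ε : ℝ, ε = D / q * t₀ ^ q := ⟨_, rfl⟩
  have hε : 0 < ε := hε_def ▸ mul_pos (div_pos hD hq0) (Real.rpow_pos_of_pos ht₀pos q)
  -- choice of λ₂
  refine ⟨min (L / (2 * ε)) ((ε / (2 * C)) ^ ((2 - q) / q)), lt_min (by positivity)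
    (Real.rpow_pos_of_pos (by positivity) _), fun lam hlam hlam2 => ?_⟩
  have hlamL : lam * ε < L / 2 := by
    have h1 : lam < L / (2 * ε) := lt_of_lt_of_le hlam2 (min_le_left _ _)
    calc lam * ε < (L / (2 * ε)) * ε := mul_lt_mul_of_pos_right h1 hε
      _ = L / 2 := by field_simp
  -- the rpow estimate
  have hpow : C * lam ^ ((2 : ℝ) / (2 - q)) < lam * ε := by
    have hexp : (2 : ℝ) / (2 - q) = 1 + q / (2 - q) := by field_simp; ring
    have h1 : lam ^ ((2 : ℝ) / (2 - q)) = lam * lam ^ (q / (2 - q)) := by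
      rw [hexp, Real.rpow_add hlam, Real.rpow_one]
    have h2 : lam ^ (q / (2 - q)) < ε / (2 * C) := by
      have hlt : lam < (ε / (2 * C)) ^ ((2 - q) / q) :=
        lt_of_lt_of_le hlam2 (min_le_right _ _)
      have h3 : lam ^ (q / (2 - q)) < ((ε / (2 * C)) ^ ((2 - q) / q)) ^ (q / (2 - q)) :=
        Real.rpow_lt_rpow hlam.le hlt (by positivity)
      have h4 : ((ε / (2 * C)) ^ ((2 - q) / q)) ^ (q / (2 - q)) = ε / (2 * C) := by
        rw [← Real.rpow_mul (by positivity)]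
        rw [show (2 - q) / q * (q / (2 - q)) = 1 by field_simp, Real.rpow_one]
      rwa [h4] at h3
    calc C * lam ^ ((2 : ℝ) / (2 - q)) = C * (lam * lam ^ (q / (2 - q))) := by rw [h1]
      _ < C * (lam * (ε / (2 * C))) :=
          mul_lt_mul_of_pos_left (mul_lt_mul_of_pos_left h2 hlam) hC
      _ = lam * ε / 2 := by field_simp
      _ < lam * ε := half_lt_self (by positivity)
  -- pointwise bound f(t) ≤ L - lam * ε
  have hpt : ∀ x ∈ ((fun t : ℝ =>
        a / 2 * S ^ ((3 : ℝ) / 2) * t ^ 2 + b / 4 * S ^ 3 * t ^ 4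
          - 1 / 6 * S ^ ((3 : ℝ) / 2) * t ^ 6 - lam * D / q * t ^ q) '' Set.Ici 0),
      x ≤ L - lam * ε := by
    rintro x ⟨t, ht, rfl⟩
    simp only [Set.mem_Ici] at ht
    rcases le_or_gt t t₀ with hcase | hcase
    · -- small t
      have hg2 : a / 2 * S ^ ((3 : ℝ) / 2) * t ^ 2 + b / 4 * S ^ 3 * t ^ 4
          - 1 / 6 * S ^ ((3 : ℝ) / 2) * t ^ 6 ≤ K * t₀ ^ 2 := by
        rw [h32, ← hv2, hK_def]
        have ht1 : t ≤ 1 := le_trans hcase ht₀le1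
        have h4 : t ^ 4 ≤ t ^ 2 := pow_le_pow_of_le_one ht ht1 (by norm_num)
        have h5 : t ^ 2 ≤ t₀ ^ 2 := pow_le_pow_left₀ ht hcase 2
        have h6 : 0 ≤ 1 / 6 * v ^ 3 * t ^ 6 := by positivity
        have h7 : t ^ 4 ≤ t₀ ^ 2 := le_trans h4 h5
        have h8 := mul_le_mul_of_nonneg_left h5 (le_of_lt (by positivity : (0:ℝ) < a / 2 * v ^ 3))
        have h9 := mul_le_mul_of_nonneg_left h7 (le_of_lt (by positivity : (0:ℝ) < b / 4 * v ^ 6))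
        linarith [h6, h8, h9]
      have hrq : 0 ≤ lam * D / q * t ^ q := by positivity
      linarith [ht₀sq, hlamL]
    · -- large t
      have h1 : t₀ ^ q ≤ t ^ q := Real.rpow_le_rpow ht₀pos.le hcase.le hq0.le
      have h2 : lam * ε ≤ lam * D / q * t ^ q := by
        rw [hε_def]
        calc lam * (D / q * t₀ ^ q) ≤ lam * (D / q * t ^ q) :=
              mul_le_mul_of_nonneg_left
                (mul_le_mul_of_nonneg_left h1 (div_pos hD hq0).le) hlam.le
          _ = lam * D / q * t ^ q := by ring
      linarith [hg t]
  -- conclude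
  have hne : ((fun t : ℝ =>
        a / 2 * S ^ ((3 : ℝ) / 2) * t ^ 2 + b / 4 * S ^ 3 * t ^ 4
          - 1 / 6 * S ^ ((3 : ℝ) / 2) * t ^ 6 - lam * D / q * t ^ q) '' Set.Ici 0).Nonempty :=
    ⟨_, ⟨0, Set.self_mem_Ici, rfl⟩⟩
  have hsup := csSup_le hne hpt
  rw [← hL_def]
  linarith [hpow]
end
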